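/- Let S_t be the shift semigroup on L²((0,1), ℂ) defined by (S_t u)(x) = u(x + t) if x + t < 1 and 0 otherwise. Then there is no constant C < 1 such that ‖S_t‖ ≤ C e^{(π/2)(1 − t)} for all t ≥ 0. In particular, since the generator of S_t satisfies r(0) = π/2, the constant e^{π/2} in Wei's bound ‖S(t)‖ ≤ e^{−r(0) t + π/2} cannot be replaced by any smaller constant. -/

import Mathlib

open MeasureTheory

/-- Lebesgue measure restricted to the interval `(0,1)`. -/
noncomputable def mu01 : Measure ℝ := volume.restrict (Set.Ioo 0 1)

/-- `S` is the left-shift semigroup on `L²((0,1), ℂ)`: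
`(S_t u)(x) = u(x + t)` if `x + t < 1`, and `0` otherwise. -/
def IsShift (S : ℝ → (Lp ℂ 2 mu01 →L[ℂ] Lp ℂ 2 mu01)) : Prop :=
  ∀ t : ℝ, 0 ≤ t → ∀ u : Lp ℂ 2 mu01, ∀ᵐ x ∂mu01,
    (S t u : ℝ → ℂ) x = if x + t < 1 then u (x + t) else 0

lemma mu01_Ioo {a b : ℝ} (ha : 0 ≤ a) (hb : b ≤ 1) :
    mu01 (Set.Ioo a b) = ENNReal.ofReal (b - a) := by
  rw [mu01, Measure.restrict_apply measurableSet_Ioo]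
  have : Set.Ioo a b ∩ Set.Ioo 0 1 = Set.Ioo a b := by
    apply Set.inter_eq_left.mpr
    intro x hx
    exact ⟨lt_of_le_of_lt ha hx.1, lt_of_lt_of_le hx.2 hb⟩
  rw [this, Real.volume_Ioo]

lemma norm_S_ge (S : ℝ → (Lp ℂ 2 mu01 →L[ℂ] Lp ℂ 2 mu01)) (hS : IsShift S)
    (t : ℝ) (ht : 0 ≤ t) (ht1 : t < 1) : 1 ≤ ‖S t‖ := by
  have hne : mu01 (Set.Ioo t 1) ≠ ⊤ := by
    rw [mu01_Ioo ht le_rfl]; exact ENNReal.ofReal_ne_top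
  have hne' : mu01 (Set.Ioo 0 (1 - t)) ≠ ⊤ := by
    rw [mu01_Ioo le_rfl (by linarith)]; exact ENNReal.ofReal_ne_top
  set u : Lp ℂ 2 mu01 := indicatorConstLp 2 measurableSet_Ioo hne (1 : ℂ) with hu
  set v : Lp ℂ 2 mu01 := indicatorConstLp 2 measurableSet_Ioo hne' (1 : ℂ) with hv
  -- S t u = v
  have hcu : ⇑u =ᵐ[mu01] (Set.Ioo t 1).indicator fun _ => (1 : ℂ) := indicatorConstLp_coeFn
  have hcu' : ∀ᵐ y ∂volume, y ∈ Set.Ioo (0:ℝ) 1 →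
      (u : ℝ → ℂ) y = (Set.Ioo t 1).indicator (fun _ => (1 : ℂ)) y :=
    (ae_restrict_iff' measurableSet_Ioo).mp hcu
  have htrans : ∀ᵐ x ∂volume, x + t ∈ Set.Ioo (0:ℝ) 1 →
      (u : ℝ → ℂ) (x + t) = (Set.Ioo t 1).indicator (fun _ => (1 : ℂ)) (x + t) :=
    (eventually_add_right_iff volume t).mpr hcu'
  have hSu : ⇑(S t u) =ᵐ[mu01] ⇑v := by
    have h1 := hS t ht u
    have h2 : ∀ᵐ x ∂mu01, x + t ∈ Set.Ioo (0:ℝ) 1 →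
        (u : ℝ → ℂ) (x + t) = (Set.Ioo t 1).indicator (fun _ => (1 : ℂ)) (x + t) :=
      ae_restrict_of_ae htrans
    have h3 : ∀ᵐ x ∂mu01, x ∈ Set.Ioo (0:ℝ) 1 :=
      (ae_restrict_iff' measurableSet_Ioo).mpr (Filter.Eventually.of_forall fun x hx => hx)
    have hcv : ⇑v =ᵐ[mu01] (Set.Ioo 0 (1 - t)).indicator fun _ => (1 : ℂ) :=
      indicatorConstLp_coeFn
    filter_upwards [h1, h2, h3, hcv] with x e1 e2 e3 e4
    rw [e1, e4]
    by_cases hlt : x + t < 1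
    · have hmem : x + t ∈ Set.Ioo (0:ℝ) 1 := ⟨by linarith [e3.1], hlt⟩
      rw [if_pos hlt, e2 hmem]
      have h5 : x + t ∈ Set.Ioo t 1 := ⟨by linarith [e3.1], hlt⟩
      have h6 : x ∈ Set.Ioo (0:ℝ) (1 - t) := ⟨e3.1, by linarith⟩
      rw [Set.indicator_of_mem h5, Set.indicator_of_mem h6]
    · rw [if_neg hlt, Set.indicator_of_notMem]
      intro hx; exact hlt (by linarith [hx.2])
  have hSuv : S t u = v := Lp.ext hSu
  have hnu : ‖u‖ = Real.sqrt (1 - t) := by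
    rw [hu, norm_indicatorConstLp two_ne_zero ENNReal.ofNat_ne_top]
    rw [measureReal_def, mu01_Ioo ht le_rfl, ENNReal.toReal_ofReal (by linarith)]
    simp [Real.sqrt_eq_rpow]

  have hnv : ‖v‖ = Real.sqrt (1 - t) := by
    rw [hv, norm_indicatorConstLp two_ne_zero ENNReal.ofNat_ne_top]
    rw [measureReal_def, mu01_Ioo le_rfl (by linarith), ENNReal.toReal_ofReal (by linarith)]
    simp [Real.sqrt_eq_rpow]

  have hpos : 0 < ‖u‖ := by rw [hnu]; exact Real.sqrt_pos.mpr (by linarith)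
  have hle := (S t).le_opNorm u
  rw [hSuv, hnv, ← hnu] at hle
  calc (1:ℝ) = ‖u‖ / ‖u‖ := (div_self (ne_of_gt hpos)).symm
    _ ≤ ‖S t‖ := by rw [div_le_iff₀ hpos] at *; linarith [hle]

/-- There is no constant `C < 1` with `‖S_t‖ ≤ C e^{(π/2)(1−t)}` for all `t ≥ 0`:
Wei's constant `e^{π/2}` is optimal for the shift semigroup. -/
theorem statement9 (S : ℝ → (Lp ℂ 2 mu01 →L[ℂ] Lp ℂ 2 mu01)) (hS : IsShift S) :
    ¬ ∃ C : ℝ, C < 1 ∧ ∀ t : ℝ, 0 ≤ t →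
      ‖S t‖ ≤ C * Real.exp (Real.pi / 2 * (1 - t)) := by
  rintro ⟨C, hC, hb⟩
  rcases le_or_gt C 0 with hC0 | hC0
  · have h0 := hb 0 le_rfl
    have h1 := norm_S_ge S hS 0 le_rfl one_pos
    have : C * Real.exp (Real.pi / 2 * (1 - 0)) ≤ 0 :=
      mul_nonpos_of_nonpos_of_nonneg hC0 (Real.exp_pos _).le
    linarith
  · have hlog : Real.log C < 0 := Real.log_neg hC0 hC
    have hpi : (0:ℝ) < Real.pi := Real.pi_pos
    set δ : ℝ := min (1/2) (-Real.log C / Real.pi) with hδ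
    have hδ0 : 0 < δ := lt_min (by norm_num) (div_pos (by linarith) hpi)
    have hδ1 : δ ≤ 1/2 := min_le_left _ _
    have ht0 : (0:ℝ) ≤ 1 - δ := by linarith
    have ht1 : 1 - δ < 1 := by linarith
    have h1 := norm_S_ge S hS (1 - δ) ht0 ht1
    have h2 := hb (1 - δ) ht0
    have key : C * Real.exp (Real.pi / 2 * (1 - (1 - δ))) < 1 := by
      have hδ2 : δ ≤ -Real.log C / Real.pi := min_le_right _ _
      have : Real.pi / 2 * (1 - (1 - δ)) ≤ -Real.log C / 2 := by
        have : Real.pi * δ ≤ -Real.log C := by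
          rw [← le_div_iff₀' hpi]; exact hδ2
        nlinarith
      calc C * Real.exp (Real.pi / 2 * (1 - (1 - δ)))
          = Real.exp (Real.log C + Real.pi / 2 * (1 - (1 - δ))) := by
            rw [Real.exp_add, Real.exp_log hC0]
        _ ≤ Real.exp (Real.log C + -Real.log C / 2) := by
            apply Real.exp_le_exp.mpr; linarith
        _ < 1 := by rw [← Real.exp_zero]; apply Real.exp_lt_exp.mpr; linarith
    linarith
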